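/- For every ε ∈ ℂ with ε ≠ 0, the space a(ε) is a Lie subalgebra of ⨁_{b∈ℤ/nℤ} gl_n(O), and the projection onto the component b = 0 restricts to a Lie algebra isomorphism from a(ε) onto gl_n(O). -/

import Mathlib

/-- The ring `O = ℂ[[z]]` of formal power series. -/
noncomputable abbrev O : Type := PowerSeries ℂ

/-- The element `z + ε` of `O`. -/
noncomputable def zPlus (ε : ℂ) : O := PowerSeries.X + PowerSeries.C ε

/-- Index type for the `n²` generators: `n` diagonal ones, and an upper and a lower one
for each pair `i < j`. -/
abbrev GenIdx (n : ℕ) : Type :=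
  Fin n ⊕ ({p : Fin n × Fin n // p.1 < p.2} ⊕ {p : Fin n × Fin n // p.1 < p.2})

/-- The generators `d_i`, `u_{i,j}(ε)`, `l_{i,j}(ε)` of `a(ε)`.  Indices are 0-based:
the 1-based condition `i ≤ b ≤ j-1` for `1 ≤ i < j ≤ n`, `b ∈ {0,…,n-1}` reads
`i < b ∧ b ≤ j` in 0-based row/column indices `i < j`. -/
noncomputable def gen (n : ℕ) (ε : ℂ) : GenIdx n → (Fin n → Matrix (Fin n) (Fin n) O)
  | Sum.inl i => fun _ => Matrix.single i i 1
  | Sum.inr (Sum.inl ⟨(i, j), _⟩) => fun b =>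
      if i.val < b.val ∧ b.val ≤ j.val then Matrix.single i j (zPlus ε)
      else Matrix.single i j 1
  | Sum.inr (Sum.inr ⟨(i, j), _⟩) => fun b =>
      if i.val < b.val ∧ b.val ≤ j.val then Matrix.single j i 1
      else Matrix.single j i (zPlus ε)

/-- The `O`-submodule `a(ε)` of `⨁_{b ∈ ℤ/nℤ} gl_n(O)`. -/
noncomputable def aEps (n : ℕ) (ε : ℂ) : Submodule O (Fin n → Matrix (Fin n) (Fin n) O) :=
  Submodule.span O (Set.range (gen n ε))

noncomputable def wgt (u : Oˣ) {n : ℕ} (b p : Fin n) : Oˣ :=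
  if p.val < b.val then u else 1

noncomputable def wf (u : Oˣ) {n : ℕ} (b p q : Fin n) : O :=
  ((wgt u b p) * (wgt u b q)⁻¹ : Oˣ)

lemma wf_zero (u : Oˣ) {n : ℕ} [NeZero n] (p q : Fin n) : wf u (0 : Fin n) p q = 1 := by
  simp [wf, wgt, Fin.val_zero]

lemma wf_diag (u : Oˣ) {n : ℕ} (b p : Fin n) : wf u b p p = 1 := by
  simp [wf]

lemma wf_mul (u : Oˣ) {n : ℕ} (b p k q : Fin n) :
    wf u b p k * wf u b k q = wf u b p q := by
  simp only [wf, ← Units.val_mul]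
  congr 1
  group

lemma wf_lt (u : Oˣ) {n : ℕ} {p q : Fin n} (h : p.val < q.val) (b : Fin n) :
    wf u b p q = if p.val < b.val ∧ b.val ≤ q.val then (u : O) else 1 := by
  unfold wf wgt
  rcases Nat.lt_or_ge p.val b.val with h1 | h1 <;> rcases Nat.lt_or_ge q.val b.val with h2 | h2
  · rw [if_pos h1, if_pos h2, if_neg (by omega)]; simp
  · rw [if_pos h1, if_neg (by omega), if_pos (by omega)]; simp
  · exact absurd h (by omega)
  · rw [if_neg (by omega), if_neg (by omega), if_neg (by omega)]; simp

lemma wf_gt (u : Oˣ) {n : ℕ} {p q : Fin n} (h : q.val < p.val) (b : Fin n) :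
    wf u b p q = if q.val < b.val ∧ b.val ≤ p.val then ((u⁻¹ : Oˣ) : O) else 1 := by
  unfold wf wgt
  rcases Nat.lt_or_ge p.val b.val with h1 | h1 <;> rcases Nat.lt_or_ge q.val b.val with h2 | h2
  · rw [if_pos h1, if_pos h2, if_neg (by omega)]; simp
  · exact absurd h (by omega)
  · rw [if_neg (by omega), if_pos h2, if_pos (by omega)]; simp
  · rw [if_neg (by omega), if_neg (by omega), if_neg (by omega)]; simp

noncomputable def Phi (u : Oˣ) (n : ℕ) :
    Matrix (Fin n) (Fin n) O →ₗ[O] (Fin n → Matrix (Fin n) (Fin n) O) where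
  toFun M := fun b => Matrix.of fun p q => wf u b p q * M p q
  map_add' M N := by funext b; refine Matrix.ext fun p q => ?_; simp [mul_add]
  map_smul' c M := by
    funext b; refine Matrix.ext fun p q => ?_
    simp only [Matrix.of_apply, Matrix.smul_apply, smul_eq_mul, Pi.smul_apply,
      RingHom.id_apply]
    ring

lemma Phi_apply (u : Oˣ) (n : ℕ) (M : Matrix (Fin n) (Fin n) O) (b p q : Fin n) :
    Phi u n M b p q = wf u b p q * M p q := rfl

lemma Phi_comp_zero (u : Oˣ) (n : ℕ) [NeZero n] (M : Matrix (Fin n) (Fin n) O) :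
    Phi u n M 0 = M := by
  refine Matrix.ext fun p q => ?_; rw [Phi_apply, wf_zero, one_mul]

lemma Phi_mul (u : Oˣ) (n : ℕ) (M N : Matrix (Fin n) (Fin n) O) (b : Fin n) :
    Phi u n M b * Phi u n N b = Phi u n (M * N) b := by
  refine Matrix.ext fun p q => ?_
  simp only [Phi_apply, Matrix.mul_apply, Finset.mul_sum]
  refine Finset.sum_congr rfl fun k _ => ?_
  rw [← wf_mul u b p k q]
  ring

lemma std_apply {n : ℕ} (i j p q : Fin n) (a : O) :
    Matrix.single i j a p q = if i = p ∧ j = q then a else 0 := rfl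

lemma phi_std_diag (u : Oˣ) (n : ℕ) (ε : ℂ) (i : Fin n) :
    Phi u n (Matrix.single i i 1) = gen n ε (Sum.inl i) := by
  funext b
  refine Matrix.ext fun p q => ?_
  show wf u b p q * Matrix.single i i (1:O) p q = Matrix.single i i (1:O) p q
  rw [std_apply]
  split_ifs with h
  · obtain ⟨rfl, rfl⟩ := h
    rw [wf_diag, one_mul]
  · rw [mul_zero]

lemma phi_std_upper (u : Oˣ) (n : ℕ) (ε : ℂ) (hu : (u : O) = zPlus ε)
    {i j : Fin n} (h : i < j) :
    Phi u n (Matrix.single i j 1)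
      = gen n ε (Sum.inr (Sum.inl ⟨(i, j), h⟩)) := by
  funext b
  refine Matrix.ext fun p q => ?_
  show wf u b p q * Matrix.single i j (1:O) p q
    = (if i.val < b.val ∧ b.val ≤ j.val then Matrix.single i j (zPlus ε)
      else Matrix.single i j 1) p q
  by_cases hpq : i = p ∧ j = q
  · obtain ⟨rfl, rfl⟩ := hpq
    rw [std_apply, if_pos ⟨rfl, rfl⟩, mul_one, wf_lt u (Fin.lt_def.mp h)]
    split_ifs with hc
    · rw [std_apply, if_pos ⟨rfl, rfl⟩]; exact hu
    · rw [std_apply, if_pos ⟨rfl, rfl⟩]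
  · rw [std_apply, if_neg hpq, mul_zero]
    split_ifs <;> rw [std_apply, if_neg hpq]

lemma phi_std_lower (u : Oˣ) (n : ℕ) (ε : ℂ) (hu : (u : O) = zPlus ε)
    {i j : Fin n} (h : i < j) :
    Phi u n (Matrix.single j i 1)
      = ((u⁻¹ : Oˣ) : O) • gen n ε (Sum.inr (Sum.inr ⟨(i, j), h⟩)) := by
  funext b
  refine Matrix.ext fun p q => ?_
  show wf u b p q * Matrix.single j i (1:O) p q
    = ((u⁻¹ : Oˣ) : O) * (if i.val < b.val ∧ b.val ≤ j.val then Matrix.single j i (1:O)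
      else Matrix.single j i (zPlus ε)) p q
  by_cases hpq : j = p ∧ i = q
  · obtain ⟨rfl, rfl⟩ := hpq
    rw [std_apply, if_pos ⟨rfl, rfl⟩, mul_one, wf_gt u (Fin.lt_def.mp h)]
    split_ifs with hc
    · rw [std_apply, if_pos ⟨rfl, rfl⟩, mul_one]
    · rw [std_apply, if_pos ⟨rfl, rfl⟩, ← hu, Units.inv_mul]
  · rw [std_apply, if_neg hpq, mul_zero]
    split_ifs <;> rw [std_apply, if_neg hpq, mul_zero]

lemma phi_std_mem (u : Oˣ) (n : ℕ) (ε : ℂ) (hu : (u : O) = zPlus ε) (p q : Fin n) :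
    Phi u n (Matrix.single p q 1) ∈ aEps n ε := by
  rcases lt_trichotomy p q with hlt | rfl | hgt
  · rw [phi_std_upper u n ε hu hlt]
    exact Submodule.subset_span ⟨_, rfl⟩
  · rw [phi_std_diag u n ε p]
    exact Submodule.subset_span ⟨_, rfl⟩
  · rw [phi_std_lower u n ε hu hgt]
    exact Submodule.smul_mem _ _ (Submodule.subset_span ⟨_, rfl⟩)

lemma phi_mem (u : Oˣ) (n : ℕ) (ε : ℂ) (hu : (u : O) = zPlus ε)
    (M : Matrix (Fin n) (Fin n) O) : Phi u n M ∈ aEps n ε := by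
  have hM : M = ∑ p : Fin n, ∑ q : Fin n, (M p q) • Matrix.single p q (1 : O) := by
    conv_lhs => rw [Matrix.matrix_eq_sum_single M]
    refine Finset.sum_congr rfl fun p _ => Finset.sum_congr rfl fun q _ => ?_
    rw [Matrix.smul_single, smul_eq_mul, mul_one]
  rw [hM, map_sum]
  refine Submodule.sum_mem _ fun p _ => ?_
  rw [map_sum]
  refine Submodule.sum_mem _ fun q _ => ?_
  rw [map_smul]
  exact Submodule.smul_mem _ _ (phi_std_mem u n ε hu p q)

lemma gen_eq_phi (u : Oˣ) (n : ℕ) [NeZero n] (ε : ℂ) (hu : (u : O) = zPlus ε)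
    (g : GenIdx n) : gen n ε g = Phi u n (gen n ε g 0) := by
  match g with
  | Sum.inl i =>
    have h0 : gen n ε (Sum.inl i) 0 = Matrix.single i i 1 := rfl
    rw [h0, phi_std_diag u n ε i]
  | Sum.inr (Sum.inl ⟨(i, j), hij⟩) =>
    have h0 : gen n ε (Sum.inr (Sum.inl ⟨(i, j), hij⟩)) 0 = Matrix.single i j 1 := by
      show (if i.val < (0 : Fin n).val ∧ (0 : Fin n).val ≤ j.val
        then Matrix.single i j (zPlus ε) else Matrix.single i j 1)
        = Matrix.single i j 1
      rw [if_neg (by simp)]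
    rw [h0, phi_std_upper u n ε hu hij]
  | Sum.inr (Sum.inr ⟨(i, j), hij⟩) =>
    have h0 : gen n ε (Sum.inr (Sum.inr ⟨(i, j), hij⟩)) 0
        = zPlus ε • Matrix.single j i 1 := by
      show (if i.val < (0 : Fin n).val ∧ (0 : Fin n).val ≤ j.val
        then Matrix.single j i (1:O) else Matrix.single j i (zPlus ε))
        = zPlus ε • Matrix.single j i 1
      rw [if_neg (by simp), Matrix.smul_single, smul_eq_mul, mul_one]
    rw [h0, map_smul, phi_std_lower u n ε hu hij, smul_smul, ← hu, Units.mul_inv, one_smul]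

lemma mem_eq_phi (u : Oˣ) (n : ℕ) [NeZero n] (ε : ℂ) (hu : (u : O) = zPlus ε)
    {A : Fin n → Matrix (Fin n) (Fin n) O} (hA : A ∈ aEps n ε) :
    Phi u n (A 0) = A := by
  induction hA using Submodule.span_induction with
  | mem x hx =>
    obtain ⟨g, rfl⟩ := hx
    exact (gen_eq_phi u n ε hu g).symm
  | zero => simp
  | add x y hx hy ihx ihy =>
    have : (x + y) 0 = x 0 + y 0 := rfl
    rw [this, map_add, ihx, ihy]
  | smul c x hx ih =>
    have : (c • x) 0 = c • x 0 := rfl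
    rw [this, map_smul, ih]

/-- for `ε ≠ 0` the space `a(ε)` is a Lie subalgebra of
`⨁_{b ∈ ℤ/nℤ} gl_n(O)` (an `O`-submodule closed under the componentwise commutator
bracket), and the projection onto the component `b = 0` (which automatically preserves
the bracket) restricts to a bijection from `a(ε)` onto all of `gl_n(O)`, i.e. a Lie
algebra isomorphism `a(ε) ≅ gl_n(O)`. -/
theorem statement3 (n : ℕ) [NeZero n] (hn : 2 ≤ n) (ε : ℂ) (hε : ε ≠ 0) :
    (∀ A ∈ aEps n ε, ∀ B ∈ aEps n ε,
        (fun b => A b * B b - B b * A b) ∈ aEps n ε) ∧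
    Set.InjOn (fun A : Fin n → Matrix (Fin n) (Fin n) O => A 0) (aEps n ε : Set _) ∧
    (fun A : Fin n → Matrix (Fin n) (Fin n) O => A 0) '' (aEps n ε : Set _)
      = Set.univ := by
  have hunit : IsUnit (zPlus ε) := by
    rw [PowerSeries.isUnit_iff_constantCoeff]
    simpa [zPlus] using isUnit_iff_ne_zero.mpr hε
  obtain ⟨u, hu⟩ := hunit
  refine ⟨?_, ?_, ?_⟩
  · intro A hA B hB
    have hA' := mem_eq_phi u n ε hu hA
    have hB' := mem_eq_phi u n ε hu hB
    have key : (fun b => A b * B b - B b * A b)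
        = Phi u n (A 0 * B 0 - B 0 * A 0) := by
      funext b
      rw [map_sub, Pi.sub_apply, ← Phi_mul, ← Phi_mul, hA', hB']
    rw [key]
    exact phi_mem u n ε hu _
  · intro A hA B hB h
    have h' : A 0 = B 0 := h
    rw [← mem_eq_phi u n ε hu hA, ← mem_eq_phi u n ε hu hB, h']
  · ext M
    simp only [Set.mem_image, Set.mem_univ, iff_true]
    exact ⟨Phi u n M, phi_mem u n ε hu M, Phi_comp_zero u n M⟩
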